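/- Let $x_1(t)$ solve $x_1' = -x_1 - x_1^2 + x_1^3$, $x_1(0)=1$, and suppose $s : [0, t_c) \to \mathbb{R}$ satisfies $s'(t) = x_1(t)^2 + (1 - x_1(t)^2)s(t)^2$ with $s(0) = 1$ and $s(t) \to \infty$ as $t \to t_c^-$. Then $\lim_{\epsilon \to 0^+} \epsilon \, s(t_c - \epsilon) = \frac{1}{1 - x_1(t_c)^2}$. -/

import Mathlib

open Filter Set

/-- Blow-up rate of the Bohman–Frieze susceptibility:
`ε · s(t_c − ε) → 1/(1 − x₁(t_c)²)` as `ε → 0⁺`. -/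
theorem stmt4 (x1 s : ℝ → ℝ) (tc : ℝ) (htc : 0 < tc)
    (hx1 : ∀ t : ℝ, HasDerivAt x1 (-x1 t - (x1 t) ^ 2 + (x1 t) ^ 3) t)
    (hx10 : x1 0 = 1)
    (hx1pos : 0 < x1 tc) (hx1lt : x1 tc < 1)
    (hs : ∀ t ∈ Set.Ico (0 : ℝ) tc,
      HasDerivAt s ((x1 t) ^ 2 + (1 - (x1 t) ^ 2) * (s t) ^ 2) t)
    (hs0 : s 0 = 1)
    (hblow : Tendsto s (nhdsWithin tc (Set.Iio tc)) atTop) :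
    Tendsto (fun ε : ℝ => ε * s (tc - ε)) (nhdsWithin 0 (Set.Ioi 0))
      (nhds (1 / (1 - (x1 tc) ^ 2))) := by
  set L : ℝ := 1 - (x1 tc) ^ 2 with hLdef
  have hL : 0 < L := by
    have : (x1 tc) ^ 2 < 1 := by nlinarith
    simp only [hLdef]; linarith
  -- derivative of 1/s
  set D : ℝ → ℝ := fun t => -(((x1 t) ^ 2 + (1 - (x1 t) ^ 2) * (s t) ^ 2) / (s t) ^ 2) with hDdef
  -- u := s⁻¹ tends to 0 from the left at tc
  have hu0 : Tendsto (fun t => (s t)⁻¹) (nhdsWithin tc (Set.Iio tc)) (nhds 0) :=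
    hblow.inv_tendsto_atTop
  -- x1 is continuous
  have hx1cont : Tendsto x1 (nhdsWithin tc (Set.Iio tc)) (nhds (x1 tc)) :=
    ((hx1 tc).continuousAt.continuousWithinAt)
  -- eventually s ≥ 1 near tc from the left
  have hsev : ∀ᶠ t in nhdsWithin tc (Set.Iio tc), 1 ≤ s t :=
    hblow.eventually_ge_atTop 1
  -- D tends to -L
  have hDt : Tendsto D (nhdsWithin tc (Set.Iio tc)) (nhds (-L)) := by
    have h1 : Tendsto (fun t => -((x1 t) ^ 2 * ((s t)⁻¹) ^ 2 + (1 - (x1 t) ^ 2)))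
        (nhdsWithin tc (Set.Iio tc)) (nhds (-((x1 tc) ^ 2 * (0 : ℝ) ^ 2 + (1 - (x1 tc) ^ 2)))) := by
      exact (((hx1cont.pow 2).mul (hu0.pow 2)).add
        (tendsto_const_nhds.sub (hx1cont.pow 2))).neg
    have h2 : -((x1 tc) ^ 2 * (0 : ℝ) ^ 2 + (1 - (x1 tc) ^ 2)) = -L := by
      simp [hLdef]
    rw [h2] at h1
    refine h1.congr' ?_
    filter_upwards [hsev] with t ht
    have hne : s t ≠ 0 := by linarith
    simp only [hDdef]
    field_simp
  -- the main estimate: u(tc-ε)/ε → L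
  have key : Tendsto (fun ε : ℝ => (s (tc - ε))⁻¹ / ε) (nhdsWithin 0 (Set.Ioi 0)) (nhds L) := by
    rw [Metric.tendsto_nhdsWithin_nhds]
    intro δ' hδ'
    set δ := δ' / 2 with hδdef
    have hδ : 0 < δ := by positivity
    -- get region where s ≠ 0 and |D + L| ≤ δ
    have hDev : ∀ᶠ t in nhdsWithin tc (Set.Iio tc), s t ≠ 0 ∧ |D t + L| ≤ δ := by
      have h1 : ∀ᶠ t in nhdsWithin tc (Set.Iio tc), dist (D t) (-L) < δ :=
        Metric.tendsto_nhds.mp hDt δ hδ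
      filter_upwards [hsev, h1] with t ht h2
      refine ⟨by linarith, ?_⟩
      rw [Real.dist_eq, sub_neg_eq_add] at h2
      linarith
    obtain ⟨l, hl, hsub⟩ := mem_nhdsLT_iff_exists_Ioo_subset.mp hDev
    have hl' : l < tc := hl
    set l' : ℝ := max l 0 with hl'def
    have hl'lt : l' < tc := max_lt hl' htc
    refine ⟨tc - l', by linarith, ?_⟩
    intro ε hε hεd
    have hεpos : 0 < ε := hε
    rw [Real.dist_eq, sub_zero, abs_of_pos hεpos] at hεd
    set t1 : ℝ := tc - ε with ht1def
    have ht1mem : t1 ∈ Ioo l' tc := ⟨by simp only [ht1def]; linarith, by simp only [ht1def]; linarith⟩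
    have hIoo : Ioo l' tc ⊆ Ioo l tc := Ioo_subset_Ioo (le_max_left l 0) le_rfl
    have hreg : ∀ t ∈ Ioo l' tc, s t ≠ 0 ∧ |D t + L| ≤ δ := fun t ht => hsub (hIoo ht)
    -- MVT estimate for t2 ∈ (t1, tc)
    have mvt : ∀ t2 ∈ Ioo t1 tc,
        |((s t2)⁻¹ + L * t2) - ((s t1)⁻¹ + L * t1)| ≤ δ * |t2 - t1| := by
      intro t2 ht2
      have ht1le : t1 ≤ t2 := le_of_lt ht2.1
      have hderiv : ∀ x ∈ Icc t1 t2,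
          HasDerivWithinAt (fun t => (s t)⁻¹ + L * t) (D x + L) (Icc t1 t2) x := by
        intro x hx
        have hxIoo : x ∈ Ioo l' tc := ⟨lt_of_lt_of_le ht1mem.1 hx.1, lt_of_le_of_lt hx.2 ht2.2⟩
        have hxIco : x ∈ Set.Ico (0 : ℝ) tc :=
          ⟨le_of_lt (lt_of_le_of_lt (le_max_right l 0) hxIoo.1), hxIoo.2⟩
        have hne : s x ≠ 0 := (hreg x hxIoo).1
        have h1 : HasDerivAt (fun t => (s t)⁻¹) (D x) x := by
          have h : HasDerivAt (fun t => (s t)⁻¹) _ x := (hs x hxIco).inv hne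
          simp only [hDdef]
          convert h using 1
          ring
        have h2 : HasDerivAt (fun t : ℝ => L * t) L x := by
          simpa using (hasDerivAt_id x).const_mul L
        exact (h1.add h2).hasDerivWithinAt
      have hbound : ∀ x ∈ Icc t1 t2, ‖D x + L‖ ≤ δ := by
        intro x hx
        have hxIoo : x ∈ Ioo l' tc := ⟨lt_of_lt_of_le ht1mem.1 hx.1, lt_of_le_of_lt hx.2 ht2.2⟩
        rw [Real.norm_eq_abs]
        exact (hreg x hxIoo).2
      have := Convex.norm_image_sub_le_of_norm_hasDerivWithin_le hderiv hbound
        (convex_Icc t1 t2) (left_mem_Icc.mpr ht1le) (right_mem_Icc.mpr ht1le)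
      simpa [Real.norm_eq_abs] using this
    -- take t2 → tc⁻
    have hlim : |(L * tc) - ((s t1)⁻¹ + L * t1)| ≤ δ * |tc - t1| := by
      have hfl : Tendsto (fun t2 => |((s t2)⁻¹ + L * t2) - ((s t1)⁻¹ + L * t1)|)
          (nhdsWithin tc (Set.Iio tc)) (nhds |(0 + L * tc) - ((s t1)⁻¹ + L * t1)|) := by
        refine Tendsto.abs ?_
        refine (hu0.add ?_).sub_const _
        exact ((continuous_const.mul continuous_id).continuousAt.continuousWithinAt)
      rw [zero_add] at hfl
      have hgl : Tendsto (fun t2 => δ * |t2 - t1|) (nhdsWithin tc (Set.Iio tc))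
          (nhds (δ * |tc - t1|)) := by
        exact (((continuous_id.sub continuous_const).abs.continuousAt.continuousWithinAt).const_mul δ)
      have hev : ∀ᶠ t2 in nhdsWithin tc (Set.Iio tc),
          |((s t2)⁻¹ + L * t2) - ((s t1)⁻¹ + L * t1)| ≤ δ * |t2 - t1| := by
        filter_upwards [Ioo_mem_nhdsLT ht1mem.2] with t2 ht2
        exact mvt t2 ht2
      exact le_of_tendsto_of_tendsto hfl hgl hev
    -- rewrite into the goal form
    have htc1 : tc - t1 = ε := by simp [ht1def]
    have h1 : |L * ε - (s t1)⁻¹| ≤ δ * ε := by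
      have : L * tc - ((s t1)⁻¹ + L * t1) = L * ε - (s t1)⁻¹ := by
        rw [← htc1]; ring
      rw [this, htc1, abs_of_pos hεpos] at hlim
      exact hlim
    rw [Real.dist_eq]
    have hgen : ∀ a : ℝ, a / ε - L = (a - L * ε) / ε := by
      intro a; field_simp
    have : (s t1)⁻¹ / ε - L = ((s t1)⁻¹ - L * ε) / ε := hgen _
    rw [this, abs_div, abs_of_pos hεpos]
    rw [div_lt_iff₀ hεpos]
    have : |(s t1)⁻¹ - L * ε| = |L * ε - (s t1)⁻¹| := abs_sub_comm _ _
    rw [this]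
    calc |L * ε - (s t1)⁻¹| ≤ δ * ε := h1
      _ < δ' * ε := by
        apply mul_lt_mul_of_pos_right _ hεpos
        simp only [hδdef]; linarith
  -- conclude: ε * s(tc - ε) = ((s (tc-ε))⁻¹ / ε)⁻¹
  have hfinal : Tendsto (fun ε : ℝ => ((s (tc - ε))⁻¹ / ε)⁻¹) (nhdsWithin 0 (Set.Ioi 0))
      (nhds L⁻¹) := key.inv₀ (ne_of_gt hL)
  have heq : (fun ε : ℝ => ε * s (tc - ε)) =ᶠ[nhdsWithin 0 (Set.Ioi 0)]
      (fun ε : ℝ => ((s (tc - ε))⁻¹ / ε)⁻¹) := by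
    filter_upwards [self_mem_nhdsWithin] with ε hε
    have hεne : ε ≠ 0 := ne_of_gt hε
    rw [inv_div, div_eq_mul_inv, inv_inv]
  rw [show (1 : ℝ) / (1 - (x1 tc) ^ 2) = L⁻¹ by rw [hLdef, one_div]]
  exact hfinal.congr' heq.symm
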